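/- For any g, r, d with d ≥ g + r, the number of L-tableaux with parameters (g, r, d) is equal to the number of L-tableaux with parameters (g, r, g + r). -/

import Mathlib

/-- An L-tableau with parameters (g,r,d): a filling of the (r+1)×(d−r) grid where
each cell is either red (`Sum.inl v`, value `v ∈ {1,…,g}`) or blue (`Sum.inr v`,
value `v ∈ {0,…,r}`). Rows are indexed bottom-to-top, columns left-to-right. -/
structure LTableau (g r d : ℕ) where
  entry : Fin (r+1) → Fin (d-r) → ℕ ⊕ ℕ
  red_left : ∀ (i : Fin (r+1)) (j j' : Fin (d-r)), (entry i j).isLeft → j' ≤ j → (entry i j').isLeft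
  red_down : ∀ (i i' : Fin (r+1)) (j : Fin (d-r)), (entry i j).isLeft → i' ≤ i → (entry i' j).isLeft
  red_vals : ∀ (i : Fin (r+1)) (j : Fin (d-r)) (v : ℕ), entry i j = Sum.inl v → 1 ≤ v ∧ v ≤ g
  red_content : ∀ v : ℕ, 1 ≤ v → v ≤ g →
    {p : Fin (r+1) × Fin (d-r) | entry p.1 p.2 = Sum.inl v}.ncard = r
  red_row : ∀ (i : Fin (r+1)) (j j' : Fin (d-r)) (a b : ℕ),
    entry i j = Sum.inl a → entry i j' = Sum.inl b → j < j' → a < b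
  red_col : ∀ (i i' : Fin (r+1)) (j : Fin (d-r)) (a b : ℕ),
    entry i j = Sum.inl a → entry i' j = Sum.inl b → i < i' → a ≤ b
  blue_vals : ∀ (i : Fin (r+1)) (j : Fin (d-r)) (v : ℕ), entry i j = Sum.inr v → v ≤ r
  blue_row : ∀ (i : Fin (r+1)) (j j' : Fin (d-r)) (a b : ℕ),
    entry i j = Sum.inr a → entry i j' = Sum.inr b → j < j' → a ≤ b
  blue_col : ∀ (i i' : Fin (r+1)) (j : Fin (d-r)) (a b : ℕ),
    entry i j = Sum.inr a → entry i' j = Sum.inr b → i < i' → a < b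

namespace LTableau
variable {g r d : ℕ}

lemma myext {T S : LTableau g r d} (h : T.entry = S.entry) : T = S := by
  cases T; cases S; dsimp at h; subst h; rfl

/-- Red cells only in the first g columns. -/
lemma red_lt (T : LTableau g r d) (i : Fin (r+1)) (j : Fin (d-r)) (v : ℕ)
    (h : T.entry i j = Sum.inl v) : (j : ℕ) < v := by
  obtain ⟨jv, hjv⟩ := j
  induction jv generalizing v with
  | zero => have := T.red_vals _ _ _ h; exact this.1
  | succ n ih =>
    have hlt : n < d - r := by omega
    have hprev : (T.entry i ⟨n, hlt⟩).isLeft :=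
      T.red_left i ⟨n+1, hjv⟩ ⟨n, hlt⟩ (by rw [h]; rfl) (by simp)
    obtain ⟨b, hb⟩ := Sum.isLeft_iff.mp hprev
    have h1 := ih b hlt hb
    have h2 := T.red_row i ⟨n, hlt⟩ ⟨n+1, hjv⟩ b v hb h (by simp)
    simp only [] at h1 ⊢; omega

lemma red_lt_g (T : LTableau g r d) (i : Fin (r+1)) (j : Fin (d-r)) (v : ℕ)
    (h : T.entry i j = Sum.inl v) : (j : ℕ) < g := by
  have := T.red_lt i j v h
  have := (T.red_vals i j v h).2
  omega

lemma blue_le_aux (T : LTableau g r d) (j : Fin (d-r)) :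
    ∀ k iv (hiv : iv < r+1) v, r - iv ≤ k → T.entry ⟨iv, hiv⟩ j = Sum.inr v → v ≤ iv := by
  intro k
  induction k with
  | zero => intro iv hiv v hk hh; have := T.blue_vals _ _ _ hh; omega
  | succ k ih =>
    intro iv hiv v hk hh
    by_cases hr : r ≤ iv
    · have := T.blue_vals _ _ _ hh; omega
    · have hiv1 : iv + 1 < r + 1 := by omega
      have hblue : ¬ (T.entry ⟨iv+1, hiv1⟩ j).isLeft := by
        intro hl
        have := T.red_down ⟨iv+1, hiv1⟩ ⟨iv, hiv⟩ j hl (by simp)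
        rw [hh] at this; simp at this
      obtain ⟨w, hw⟩ := Sum.isRight_iff.mp (Sum.not_isLeft.mp hblue)
      have h1 := ih (iv+1) hiv1 w (by omega) hw
      have h2 := T.blue_col ⟨iv, hiv⟩ ⟨iv+1, hiv1⟩ j v w hh hw (by simp)
      omega

lemma blue_le (T : LTableau g r d) (i : Fin (r+1)) (j : Fin (d-r)) (v : ℕ)
    (h : T.entry i j = Sum.inr v) : v ≤ (i : ℕ) := by
  obtain ⟨iv, hiv⟩ := i
  exact T.blue_le_aux j r iv hiv v (by omega) h

/-- Columns past g are forced. -/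
lemma tail_eq (T : LTableau g r d) (j : Fin (d-r)) (hj : g ≤ (j : ℕ)) :
    ∀ iv (hiv : iv < r+1), T.entry ⟨iv, hiv⟩ j = Sum.inr iv := by
  intro iv
  induction iv with
  | zero =>
    intro hiv
    have hnb : ¬ (T.entry ⟨0, hiv⟩ j).isLeft := by
      intro hl
      obtain ⟨v, hv⟩ := Sum.isLeft_iff.mp hl
      have := T.red_lt_g _ _ _ hv; omega
    obtain ⟨w, hw⟩ := Sum.isRight_iff.mp (Sum.not_isLeft.mp hnb)
    have := T.blue_le _ _ _ hw
    simp only [Nat.le_zero] at this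
    rw [hw, this]
  | succ n ih =>
    intro hiv
    have hnb : ¬ (T.entry ⟨n+1, hiv⟩ j).isLeft := by
      intro hl
      obtain ⟨v, hv⟩ := Sum.isLeft_iff.mp hl
      have := T.red_lt_g _ _ _ hv; omega
    obtain ⟨w, hw⟩ := Sum.isRight_iff.mp (Sum.not_isLeft.mp hnb)
    have h1 : w ≤ n + 1 := T.blue_le _ _ _ hw
    have hprev := ih (by omega)
    have h2 := T.blue_col ⟨n, by omega⟩ ⟨n+1, hiv⟩ j n w hprev hw (by simp)
    have : w = n + 1 := by omega
    rw [hw, this]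


variable {g r d : ℕ}

/-- The embedding of column indices. -/
def cemb (h : g + r ≤ d) (j : Fin (g + r - r)) : Fin (d - r) :=
  ⟨(j : ℕ), by have := j.isLt; omega⟩

lemma cemb_inj (h : g + r ≤ d) :
    Function.Injective (fun p : Fin (r+1) × Fin (g + r - r) => (p.1, cemb h p.2)) := by
  intro p q hpq
  simp only [Prod.ext_iff, cemb, Fin.mk.injEq] at hpq
  exact Prod.ext hpq.1 (Fin.ext hpq.2)

/-- Restriction of a wide tableau to the first g columns. -/
def restrict (h : g + r ≤ d) (T : LTableau g r d) : LTableau g r (g + r) where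
  entry i j := T.entry i (cemb h j)
  red_left i j j' hl hle := T.red_left i _ _ hl (by simpa [cemb] using hle)
  red_down i i' j hl hle := T.red_down i i' _ hl hle
  red_vals i j v hv := T.red_vals i _ v hv
  red_content v h1 h2 := by
    show {p : Fin (r+1) × Fin (g + r - r) | T.entry p.1 (cemb h p.2) = Sum.inl v}.ncard = r
    have himg : {p : Fin (r+1) × Fin (d-r) | T.entry p.1 p.2 = Sum.inl v} =
        (fun p : Fin (r+1) × Fin (g + r - r) => (p.1, cemb h p.2)) ''
          {p : Fin (r+1) × Fin (g + r - r) | T.entry p.1 (cemb h p.2) = Sum.inl v} := by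
      ext p
      constructor
      · intro hp
        have hlt : (p.2 : ℕ) < g + r - r := by
          have := T.red_lt_g p.1 p.2 v hp; omega
        exact ⟨(p.1, ⟨(p.2 : ℕ), hlt⟩), by simpa [cemb] using hp, by simp [cemb]⟩
      · rintro ⟨q, hq, rfl⟩
        exact hq
    have hc := T.red_content v h1 h2
    rw [himg, Set.ncard_image_of_injective _ (cemb_inj h)] at hc
    exact hc
  red_row i j j' a b ha hb hlt := T.red_row i _ _ a b ha hb (by simpa [cemb] using hlt)
  red_col i i' j a b ha hb hlt := T.red_col i i' _ a b ha hb hlt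
  blue_vals i j v hv := T.blue_vals i _ v hv
  blue_row i j j' a b ha hb hlt := T.blue_row i _ _ a b ha hb (by simpa [cemb] using hlt)
  blue_col i i' j a b ha hb hlt := T.blue_col i i' _ a b ha hb hlt

/-- Extension entry function. -/
def eEntry (h : g + r ≤ d) (T : LTableau g r (g + r)) (i : Fin (r+1)) (j : Fin (d-r)) : ℕ ⊕ ℕ :=
  if hj : (j : ℕ) < g + r - r then T.entry i ⟨(j : ℕ), hj⟩ else Sum.inr (i : ℕ)

lemma eEntry_isLeft (h : g + r ≤ d) (T : LTableau g r (g + r)) (i : Fin (r+1)) (j : Fin (d-r))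
    (hl : (eEntry h T i j).isLeft) : (j : ℕ) < g + r - r := by
  by_contra hc
  rw [eEntry, dif_neg hc] at hl
  simp at hl

/-- Extension of a narrow tableau to d columns. -/
def extend (h : g + r ≤ d) (T : LTableau g r (g + r)) : LTableau g r d where
  entry := eEntry h T
  red_left i j j' hl hle := by
    have hj := eEntry_isLeft h T i j hl
    have hj' : (j' : ℕ) < g + r - r := lt_of_le_of_lt hle hj
    rw [eEntry, dif_pos hj] at hl
    rw [eEntry, dif_pos hj']
    exact T.red_left i _ _ hl hle
  red_down i i' j hl hle := by
    have hj := eEntry_isLeft h T i j hl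
    rw [eEntry, dif_pos hj] at hl ⊢
    exact T.red_down i i' _ hl hle
  red_vals i j v hv := by
    have hj := eEntry_isLeft h T i j (by rw [hv]; rfl)
    rw [eEntry, dif_pos hj] at hv
    exact T.red_vals i _ v hv
  red_content v h1 h2 := by
    have himg : {p : Fin (r+1) × Fin (d-r) | eEntry h T p.1 p.2 = Sum.inl v} =
        (fun p : Fin (r+1) × Fin (g + r - r) => (p.1, cemb h p.2)) ''
          {p : Fin (r+1) × Fin (g + r - r) | T.entry p.1 p.2 = Sum.inl v} := by
      ext p
      constructor
      · intro hp
        have hlt : (p.2 : ℕ) < g + r - r := eEntry_isLeft h T p.1 p.2 (by rw [Set.mem_setOf_eq] at hp; rw [hp]; rfl)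
        refine ⟨(p.1, ⟨(p.2 : ℕ), hlt⟩), ?_, by simp [cemb]⟩
        have := hp
        rw [Set.mem_setOf_eq, eEntry, dif_pos hlt] at this
        exact this
      · rintro ⟨q, hq, rfl⟩
        have : (cemb h q.2 : ℕ) < g + r - r := by have := q.2.isLt; simp [cemb]; omega
        rw [Set.mem_setOf_eq, eEntry, dif_pos this]
        simpa [cemb] using hq
    rw [himg, Set.ncard_image_of_injective _ (cemb_inj h)]
    exact T.red_content v h1 h2
  red_row i j j' a b ha hb hlt := by
    have hj := eEntry_isLeft h T i j (by rw [ha]; rfl)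
    have hj' := eEntry_isLeft h T i j' (by rw [hb]; rfl)
    rw [eEntry, dif_pos hj] at ha
    rw [eEntry, dif_pos hj'] at hb
    exact T.red_row i _ _ a b ha hb (by simpa using hlt)
  red_col i i' j a b ha hb hlt := by
    have hj := eEntry_isLeft h T i j (by rw [ha]; rfl)
    rw [eEntry, dif_pos hj] at ha hb
    exact T.red_col i i' _ a b ha hb hlt
  blue_vals i j v hv := by
    by_cases hj : (j : ℕ) < g + r - r
    · rw [eEntry, dif_pos hj] at hv
      exact T.blue_vals i _ v hv
    · rw [eEntry, dif_neg hj] at hv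
      obtain rfl : (i : ℕ) = v := Sum.inr.inj hv
      omega
  blue_row i j j' a b ha hb hlt := by
    by_cases hj : (j : ℕ) < g + r - r
    · by_cases hj' : (j' : ℕ) < g + r - r
      · rw [eEntry, dif_pos hj] at ha
        rw [eEntry, dif_pos hj'] at hb
        exact T.blue_row i _ _ a b ha hb (by simpa using hlt)
      · rw [eEntry, dif_pos hj] at ha
        rw [eEntry, dif_neg hj'] at hb
        obtain rfl : (i : ℕ) = b := Sum.inr.inj hb
        exact T.blue_le i _ a ha
    · have hj' : ¬ (j' : ℕ) < g + r - r := by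
        have : (j : ℕ) < (j' : ℕ) := hlt
        omega
      rw [eEntry, dif_neg hj] at ha
      rw [eEntry, dif_neg hj'] at hb
      obtain rfl : (i : ℕ) = a := Sum.inr.inj ha
      obtain rfl : (i : ℕ) = b := Sum.inr.inj hb
      exact le_refl _
  blue_col i i' j a b ha hb hlt := by
    by_cases hj : (j : ℕ) < g + r - r
    · rw [eEntry, dif_pos hj] at ha hb
      exact T.blue_col i i' _ a b ha hb hlt
    · rw [eEntry, dif_neg hj] at ha hb
      obtain rfl : (i : ℕ) = a := Sum.inr.inj ha
      obtain rfl : (i' : ℕ) = b := Sum.inr.inj hb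
      exact hlt


end LTableau

/-- Truncation: for d ≥ g + r, the number of L-tableaux with parameters (g,r,d)
equals the number with parameters (g,r,g+r). -/
theorem stmt_1 (g r d : ℕ) (h : g + r ≤ d) :
    Nat.card (LTableau g r d) = Nat.card (LTableau g r (g + r)) := by
  refine Nat.card_congr ⟨LTableau.restrict h, LTableau.extend h, ?_, ?_⟩
  · intro T
    apply LTableau.myext
    funext i j
    show LTableau.eEntry h (LTableau.restrict h T) i j = T.entry i j
    by_cases hj : (j : ℕ) < g + r - r
    · rw [LTableau.eEntry, dif_pos hj]
      rfl
    · rw [LTableau.eEntry, dif_neg hj]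
      exact (T.tail_eq j (by omega) i.1 i.2).symm
  · intro T
    apply LTableau.myext
    funext i j
    show LTableau.eEntry h T i (LTableau.cemb h j) = T.entry i j
    have hj : ((LTableau.cemb h j : Fin (d-r)) : ℕ) < g + r - r := by
      have := j.isLt; simp [LTableau.cemb]; omega
    rw [LTableau.eEntry, dif_pos hj]
    rfl
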